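/- Let N1 and N2 be tree-child phylogenetic networks on the same set S of taxa. Then the multisets Υ(N1) and Υ(N2) of equivalence classes of their nodes coincide if and only if N1 and N2 are isomorphic as S-DAGs. Equivalently, Nakhleh's dissimilarity m(N1,N2) = (1/2)|Υ(N1) △ Υ(N2)| vanishes if and only if N1 ≅ N2. -/

import Mathlib

open scoped Classical

/-- A finite directed acyclic graph whose leaves are (injectively) labeled in `S`. -/
structure LDag (S : Type) : Type 1 where
  V : Type
  fin : Fintype V
  adj : V → V → Prop
  acyclic : WellFounded (fun a b => adj b a)
  lab : V → S
  labInj : ∀ u v : V, (∀ w, ¬ adj u w) → (∀ w, ¬ adj v w) → lab u = lab v → u = v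

attribute [instance] LDag.fin

namespace LDag

variable {S : Type}

/-- A leaf is a node with no children. -/
def IsLeaf (N : LDag S) (v : N.V) : Prop := ∀ w, ¬ N.adj v w

/-- `v` is a descendant of `u` (every node is a descendant of itself). -/
def Desc (N : LDag S) (u v : N.V) : Prop := Relation.ReflTransGen N.adj u v

/-- The cluster of `u`: the set of labels of the leaves that are descendants of `u`. -/
def cluster (N : LDag S) (u : N.V) : Set S :=
  {s | ∃ v, N.Desc u v ∧ N.IsLeaf v ∧ N.lab v = s}

/-- A tree node: a node with at most one parent. -/
def TreeNode (N : LDag S) (v : N.V) : Prop :=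
  ∀ p q, N.adj p v → N.adj q v → p = q

/-- A root: a node with no parents. -/
def IsRoot (N : LDag S) (r : N.V) : Prop := ∀ u, ¬ N.adj u r

/-- Tree-child: every internal node has a child that is a tree node. -/
def TreeChild (N : LDag S) : Prop :=
  ∀ v, ¬ N.IsLeaf v → ∃ w, N.adj v w ∧ N.TreeNode w

/-- `PathN N u v k`: there is a directed path of length `k` from `u` to `v`. -/
inductive PathN (N : LDag S) : N.V → N.V → ℕ → Prop
  | refl (v : N.V) : PathN N v v 0
  | cons {u v w : N.V} {k : ℕ} : N.adj u v → PathN N v w k → PathN N u w (k + 1)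

/-- The height of a node: the largest length of a directed path from it to a leaf. -/
noncomputable def height (N : LDag S) (v : N.V) : ℕ :=
  sSup {k | ∃ s, N.IsLeaf s ∧ PathN N v s k}

/-- Node equivalence between (possibly equal) labeled DAGs, defined recursively:
two leaves with the same label are equivalent, and two internal nodes are equivalent
when their children can be matched into equivalent pairs. -/
noncomputable def equivTo (N1 N2 : LDag S) : N1.V → N2.V → Prop :=
  N1.acyclic.fix (fun u ih v =>
    (N1.IsLeaf u ∧ N2.IsLeaf v ∧ N1.lab u = N2.lab v) ∨
    (¬ N1.IsLeaf u ∧ ¬ N2.IsLeaf v ∧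
      ∃ f : {w // N1.adj u w} ≃ {w // N2.adj v w},
        ∀ w : {w // N1.adj u w}, ih w.1 w.2 (f w).1))

end LDag

/-- Pre-nested labels: finitely branching trees of labels (multisets are obtained
as a quotient by `NEq` below). -/
inductive PreNested (S : Type) : Type
  | leaf : S → PreNested S
  | node : List (PreNested S) → PreNested S

/-- Equality of pre-nested labels as nested multisets. -/
inductive NEq {S : Type} : PreNested S → PreNested S → Prop
  | leaf (a : S) : NEq (.leaf a) (.leaf a)
  | node {l m : List (PreNested S)} : List.Forall₂ NEq l m → NEq (.node l) (.node m)
  | perm {l m : List (PreNested S)} : l.Perm m → NEq (.node l) (.node m)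
  | symm {a b : PreNested S} : NEq a b → NEq b a
  | trans {a b c : PreNested S} : NEq a b → NEq b c → NEq a c

mutual
  theorem NEq.refl {S : Type} : ∀ a : PreNested S, NEq a a
    | .leaf s => .leaf s
    | .node l => .node (NEq.reflL l)
  theorem NEq.reflL {S : Type} : ∀ l : List (PreNested S), List.Forall₂ NEq l l
    | [] => .nil
    | a :: l => .cons (NEq.refl a) (NEq.reflL l)
end

instance PreNested.setoid (S : Type) : Setoid (PreNested S) :=
  ⟨NEq, ⟨NEq.refl, fun h => h.symm, fun h1 h2 => h1.trans h2⟩⟩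

/-- Nested multisets (of multisets of ...) of labels. -/
def Nested (S : Type) : Type := Quotient (PreNested.setoid S)

/-- `TaxaIn s p`: the taxon `s` occurs somewhere (at any nesting depth) in `p`. -/
inductive TaxaIn {S : Type} : S → PreNested S → Prop
  | leaf (s : S) : TaxaIn s (.leaf s)
  | node {s : S} {p : PreNested S} {l : List (PreNested S)} :
      p ∈ l → TaxaIn s p → TaxaIn s (.node l)

mutual
  /-- Nesting depth of a pre-nested label: a singleton `{s}` has depth 1. -/
  def depthP {S : Type} : PreNested S → ℕ
    | .leaf _ => 1
    | .node l => depthL l + 1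
  def depthL {S : Type} : List (PreNested S) → ℕ
    | [] => 0
    | p :: ps => max (depthP p) (depthL ps)
end

namespace LDag

variable {S : Type}

/-- The nested label of a node: the singleton of its label for a leaf, and the
multiset of the nested labels of its children otherwise. -/
noncomputable def nested (N : LDag S) : N.V → Nested S :=
  N.acyclic.fix (fun v ih =>
    if h : N.IsLeaf v then (⟦PreNested.leaf (N.lab v)⟧ : Nested S)
    else ⟦PreNested.node (((Finset.univ.filter (fun w => N.adj v w)).attach.toList).map
        (fun w => (ih w.1 (Finset.mem_filter.mp w.2).2).out))⟧)

/-- `Υ(N)`: the multiset of equivalence classes (= nested labels) of the nodes of `N`,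
with multiplicities. -/
noncomputable def UpsilonM (N : LDag S) : Multiset (Nested S) :=
  Finset.univ.val.map N.nested

/-- Label-preserving isomorphisms of labeled DAGs. -/
structure Iso (N1 N2 : LDag S) where
  toEquiv : N1.V ≃ N2.V
  adj_iff : ∀ u v : N1.V, N2.adj (toEquiv u) (toEquiv v) ↔ N1.adj u v
  lab_leaf : ∀ v : N1.V, N1.IsLeaf v → N2.lab (toEquiv v) = N1.lab v

def IsIso (N1 N2 : LDag S) : Prop := Nonempty (Iso N1 N2)

theorem Iso.leaf_map {N1 N2 : LDag S} (e : Iso N1 N2) {v : N1.V} (h : N1.IsLeaf v) :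
    N2.IsLeaf (e.toEquiv v) := by
  intro w hw
  have hw' : N2.adj (e.toEquiv v) (e.toEquiv (e.toEquiv.symm w)) := by simpa using hw
  exact h _ ((e.adj_iff _ _).mp hw')

def Iso.refl (N : LDag S) : Iso N N :=
  ⟨Equiv.refl _, fun _ _ => Iff.rfl, fun _ _ => rfl⟩

def Iso.symm {N1 N2 : LDag S} (e : Iso N1 N2) : Iso N2 N1 where
  toEquiv := e.toEquiv.symm
  adj_iff u v := by rw [← e.adj_iff]; simp
  lab_leaf v hv := by
    have h1 : N1.IsLeaf (e.toEquiv.symm v) := by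
      intro w hw
      have : N2.adj v (e.toEquiv w) := by
        have := (e.adj_iff (e.toEquiv.symm v) w).mpr hw
        simpa using this
      exact hv _ this
    have := e.lab_leaf _ h1
    simpa using this.symm

def Iso.trans {N1 N2 N3 : LDag S} (e : Iso N1 N2) (f : Iso N2 N3) : Iso N1 N3 where
  toEquiv := e.toEquiv.trans f.toEquiv
  adj_iff u v := by
    simp only [Equiv.trans_apply]
    rw [f.adj_iff, e.adj_iff]
  lab_leaf v hv := by
    simp only [Equiv.trans_apply]
    rw [f.lab_leaf _ (e.leaf_map hv), e.lab_leaf _ hv]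

instance isoSetoid (S : Type) : Setoid (LDag S) :=
  ⟨IsIso, ⟨fun N => ⟨Iso.refl N⟩, fun ⟨e⟩ => ⟨e.symm⟩, fun ⟨e⟩ ⟨f⟩ => ⟨e.trans f⟩⟩⟩

/-- Isomorphism classes of labeled DAGs. -/
def IsoClass (S : Type) : Type 1 := Quotient (isoSetoid S)

/-- The rooted subnetwork `N(u)` generated by a node `u`: the induced subgraph on
the set of descendants of `u`. -/
noncomputable def subnet (N : LDag S) (u : N.V) : LDag S where
  V := {v // N.Desc u v}
  fin := Subtype.fintype _
  adj a b := N.adj a.1 b.1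
  acyclic := by
    have h : (fun (a b : {v // N.Desc u v}) => N.adj b.1 a.1) =
        InvImage (fun a b => N.adj b a) Subtype.val := rfl
    rw [h]
    exact InvImage.wf _ N.acyclic
  lab v := N.lab v.1
  labInj := by
    intro a b ha hb hlab
    apply Subtype.ext
    refine N.labInj a.1 b.1 ?_ ?_ hlab
    · intro w hw
      exact ha ⟨w, a.2.trans (Relation.ReflTransGen.single hw)⟩ hw
    · intro w hw
      exact hb ⟨w, b.2.trans (Relation.ReflTransGen.single hw)⟩ hw

/-- `Σ(N)`: the multiset of isomorphism classes of the rooted subnetworks generated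
by the nodes of `N`, with multiplicities. -/
noncomputable def SigmaM (N : LDag S) : Multiset (IsoClass S) :=
  Finset.univ.val.map (fun u => (Quotient.mk (isoSetoid S) (N.subnet u) : IsoClass S))

/-- Nakhleh's dissimilarity `m(N1,N2) = |Υ(N1) △ Υ(N2)| / 2`. -/
noncomputable def mDist (N1 N2 : LDag S) : ℝ :=
  (((N1.UpsilonM - N2.UpsilonM) + (N2.UpsilonM - N1.UpsilonM)).card : ℝ) / 2

/-- The distance `σ(N1,N2) = |Σ(N1) △ Σ(N2)| / 2`. -/
noncomputable def sigmaDist (N1 N2 : LDag S) : ℝ :=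
  (((N1.SigmaM - N2.SigmaM) + (N2.SigmaM - N1.SigmaM)).card : ℝ) / 2

end LDag

/-- An `S`-DAG: a labeled DAG whose leaves are bijectively labeled by `S`. -/
structure SDag (S : Type) extends LDag S where
  surjLab : ∀ s : S, ∃ v, toLDag.IsLeaf v ∧ toLDag.lab v = s

/-- A phylogenetic network on `S`: a rooted `S`-DAG. -/
structure PhyloNetwork (S : Type) extends SDag S where
  rooted : ∃! r, toLDag.IsRoot r

namespace TCProof
open LDag

variable {S : Type}

noncomputable def toStruct : PreNested S → S ⊕ Multiset (Nested S)
  | .leaf s => Sum.inl s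
  | .node l => Sum.inr ((l.map (Quotient.mk (PreNested.setoid S)) : List (Nested S)) : Multiset (Nested S))

theorem toStruct_eq {a b : PreNested S} (h : NEq a b) : toStruct a = toStruct b := by
  refine @NEq.rec S (fun a b _ => toStruct a = toStruct b)
    (fun l m _ => l.map (Quotient.mk (PreNested.setoid S)) = m.map (Quotient.mk (PreNested.setoid S)))
    (fun _ => rfl) ?_ ?_ (fun _ ih => ih.symm) (fun _ _ ih1 ih2 => ih1.trans ih2)
    rfl ?_ a b h
  · intro l m _ ih
    simp only [toStruct]
    exact congrArg _ (congrArg _ ih)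
  · intro l m hp
    simp only [toStruct]
    exact congrArg _ (Quot.sound (hp.map _))
  · intro a b l₁ l₂ hab _ ih1 ih2
    simp only [List.map]
    rw [Quotient.sound hab, ih2]

noncomputable def structN : Nested S → S ⊕ Multiset (Nested S) :=
  Quotient.lift toStruct (fun _ _ h => toStruct_eq h)

theorem exists_forall₂ : ∀ (l m : List (PreNested S)),
    (l.map (Quotient.mk (PreNested.setoid S))).Perm (m.map (Quotient.mk (PreNested.setoid S))) →
    ∃ m', List.Forall₂ NEq l m' ∧ m'.Perm m := by
  intro l
  induction l with
  | nil =>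
    intro m h
    have hm : m.map (Quotient.mk (PreNested.setoid S)) = [] := h.symm.eq_nil
    rw [List.map_eq_nil_iff] at hm
    exact ⟨[], .nil, by rw [hm]⟩
  | cons a l ih =>
    intro m h
    have ha : (⟦a⟧ : Nested S) ∈ m.map (Quotient.mk (PreNested.setoid S)) :=
      h.mem_iff.mp List.mem_cons_self
    obtain ⟨b, hb, hba⟩ := List.mem_map.mp ha
    obtain ⟨m₁, m₂, rfl⟩ := List.append_of_mem hb
    have hperm : (l.map (Quotient.mk (PreNested.setoid S))).Perm
        ((m₁ ++ m₂).map (Quotient.mk (PreNested.setoid S))) := by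
      have h2 : ((m₁ ++ b :: m₂).map (Quotient.mk (PreNested.setoid S))).Perm
          ((⟦b⟧ : Nested S) :: (m₁ ++ m₂).map (Quotient.mk (PreNested.setoid S))) := by
        simp only [List.map_append, List.map_cons]
        exact List.perm_middle
      have h3 := h.trans h2
      rw [hba] at h3
      exact h3.cons_inv
    obtain ⟨m', hf, hp⟩ := ih _ hperm
    refine ⟨b :: m', .cons (Quotient.exact hba.symm) hf, ?_⟩
    exact (hp.cons b).trans List.perm_middle.symm

theorem structN_inj : Function.Injective (structN (S := S)) := by
  intro a b
  refine Quotient.inductionOn₂ a b ?_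
  intro p q h
  cases p with
  | leaf s =>
    cases q with
    | leaf t =>
      simp only [structN, Quotient.lift_mk, toStruct, Sum.inl.injEq] at h
      rw [h]
    | node m => exact absurd h (by simp [structN, toStruct])
  | node l =>
    cases q with
    | leaf t => exact absurd h (by simp [structN, toStruct])
    | node m =>
      simp only [structN, Quotient.lift_mk, toStruct, Sum.inr.injEq, Multiset.coe_eq_coe] at h
      obtain ⟨m', hf, hp⟩ := exists_forall₂ l m h
      exact Quotient.sound ((NEq.node hf).trans (NEq.perm hp))

end TCProof
namespace TCProof
open LDag

variable {S : Type}

noncomputable def childMS (N : LDag S) (v : N.V) : Multiset (Nested S) :=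
  (Finset.univ.filter (fun w => N.adj v w)).val.map N.nested

theorem nested_def (N : LDag S) (v : N.V) :
    N.nested v = if N.IsLeaf v then (⟦PreNested.leaf (N.lab v)⟧ : Nested S)
      else ⟦PreNested.node (((Finset.univ.filter (fun w => N.adj v w)).attach.toList).map
          (fun w => (N.nested w.1).out))⟧ := by
  show WellFounded.fix _ _ v = _
  rw [WellFounded.fix_eq]
  split
  · rename_i hh; exact dif_pos hh
  · rename_i hh; exact dif_neg hh

theorem structN_nested (N : LDag S) (v : N.V) :
    structN (N.nested v) = if N.IsLeaf v then Sum.inl (N.lab v) else Sum.inr (childMS N v) := by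
  rw [nested_def]
  split
  · rfl
  · simp only [structN, Quotient.lift_mk, toStruct, Sum.inr.injEq]
    erw [List.map_map]
    have h1 : (Quotient.mk (PreNested.setoid S)) ∘ (fun w : {w // w ∈ Finset.univ.filter (fun w => N.adj v w)} => (N.nested w.1).out) = fun w => N.nested w.1 := by
      funext w
      exact Quotient.out_eq _
    erw [h1]
    show ((((Finset.univ.filter (fun w => N.adj v w)).attach.toList).map
        (fun w => N.nested w.1) : List (Nested S)) : Multiset (Nested S)) = _
    rw [← Multiset.map_coe, Finset.coe_toList, Finset.attach_val]
    rw [childMS]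
    conv_rhs => rw [← Multiset.attach_map_val ((Finset.univ.filter (fun w => N.adj v w)).val), Multiset.map_map]
    rfl

end TCProof
namespace TCProof
open LDag

variable {S : Type}

theorem leaf_iff {N1 N2 : LDag S} {u : N1.V} {v : N2.V} (h : N1.nested u = N2.nested v) :
    N1.IsLeaf u ↔ N2.IsLeaf v := by
  have hs := congrArg structN h
  rw [structN_nested, structN_nested] at hs
  constructor
  · intro hu
    by_contra hv
    rw [if_pos hu, if_neg hv] at hs
    exact Sum.inl_ne_inr hs
  · intro hv
    by_contra hu
    rw [if_neg hu, if_pos hv] at hs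
    exact Sum.inr_ne_inl hs

theorem lab_eq {N1 N2 : LDag S} {u : N1.V} {v : N2.V} (h : N1.nested u = N2.nested v)
    (hu : N1.IsLeaf u) : N1.lab u = N2.lab v := by
  have hs := congrArg structN h
  rw [structN_nested, structN_nested, if_pos hu, if_pos ((leaf_iff h).mp hu)] at hs
  exact Sum.inl_injective hs

theorem childMS_eq {N1 N2 : LDag S} {u : N1.V} {v : N2.V} (h : N1.nested u = N2.nested v)
    (hu : ¬ N1.IsLeaf u) : childMS N1 u = childMS N2 v := by
  have hs := congrArg structN h
  rw [structN_nested, structN_nested, if_neg hu, if_neg (fun hv => hu ((leaf_iff h).mpr hv))] at hs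
  exact Sum.inr_injective hs

theorem nested_inj (N : LDag S) (hN : N.TreeChild) : Function.Injective N.nested := by
  intro u
  refine N.acyclic.induction (C := fun u => ∀ x, N.nested u = N.nested x → u = x) u ?_
  intro u ih x hx
  by_cases hu : N.IsLeaf u
  · exact N.labInj u x hu ((leaf_iff hx).mp hu) (lab_eq hx hu)
  · have hxl : ¬ N.IsLeaf x := fun hl => hu ((leaf_iff hx).mpr hl)
    have hc : childMS N u = childMS N x := childMS_eq hx hu
    set C := Finset.univ.filter (fun w => N.adj u w) with hC
    set D := Finset.univ.filter (fun w => N.adj x w) with hD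
    have hsub : C ⊆ D := by
      intro w hw
      have hmem : N.nested w ∈ childMS N x := by
        rw [← hc]
        exact Multiset.mem_map.mpr ⟨w, hw, rfl⟩
      obtain ⟨y, hy, hyw⟩ := Multiset.mem_map.mp hmem
      have hadj : N.adj u w := (Finset.mem_filter.mp hw).2
      have := ih w hadj y hyw.symm
      rwa [this]
    have hcard : D.card ≤ C.card := by
      have := congrArg Multiset.card hc
      simp only [childMS, Multiset.card_map] at this
      exact le_of_eq this.symm
    have hCD : C = D := Finset.eq_of_subset_of_card_le hsub hcard
    obtain ⟨w, hw, htc⟩ := hN u hu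
    have hwD : w ∈ D := by
      rw [← hCD]
      exact Finset.mem_filter.mpr ⟨Finset.mem_univ w, hw⟩
    exact htc u x hw (Finset.mem_filter.mp hwD).2

end TCProof
namespace TCProof
open LDag

variable {S : Type}

theorem nested_iso {N1 N2 : LDag S} (e : Iso N1 N2) (u : N1.V) :
    N2.nested (e.toEquiv u) = N1.nested u := by
  refine N1.acyclic.induction (C := fun u => N2.nested (e.toEquiv u) = N1.nested u) u ?_
  intro u ih
  apply structN_inj
  rw [structN_nested, structN_nested]
  by_cases hu : N1.IsLeaf u
  · rw [if_pos hu, if_pos (e.leaf_map hu), e.lab_leaf u hu]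
  · have hu2 : ¬ N2.IsLeaf (e.toEquiv u) := by
      intro hl
      have := e.symm.leaf_map hl
      simp only [Iso.symm] at this
      rw [Equiv.symm_apply_apply] at this
      exact hu this
    rw [if_neg hu, if_neg hu2]
    congr 1
    have hfil : Finset.univ.filter (fun w => N2.adj (e.toEquiv u) w) =
        (Finset.univ.filter (fun w => N1.adj u w)).map e.toEquiv.toEmbedding := by
      ext y
      rw [Finset.mem_filter, Finset.mem_map]
      constructor
      · intro ⟨_, hy⟩
        refine ⟨e.toEquiv.symm y, Finset.mem_filter.mpr ⟨Finset.mem_univ _, ?_⟩,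
          Equiv.apply_symm_apply _ _⟩
        have h' : N2.adj (e.toEquiv u) (e.toEquiv (e.toEquiv.symm y)) := by
          rwa [Equiv.apply_symm_apply]
        exact (e.adj_iff _ _).mp h'
      · rintro ⟨w, hw, rfl⟩
        exact ⟨Finset.mem_univ _, (e.adj_iff _ _).mpr (Finset.mem_filter.mp hw).2⟩
    rw [childMS, childMS, hfil, Finset.map_val, Multiset.map_map]
    apply Multiset.map_congr rfl
    intro w hw
    exact ih w (Finset.mem_filter.mp hw).2

theorem upsilon_of_iso {N1 N2 : LDag S} (h : N1.IsIso N2) : N1.UpsilonM = N2.UpsilonM := by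
  obtain ⟨e⟩ := h
  have h1 : N1.UpsilonM = Finset.univ.val.map (fun u => N2.nested (e.toEquiv u)) := by
    rw [UpsilonM]
    apply Multiset.map_congr rfl
    intro u _
    exact (nested_iso e u).symm
  rw [h1, UpsilonM]
  have h2 : (Finset.univ.map e.toEquiv.toEmbedding) = (Finset.univ : Finset N2.V) := by
    ext y
    rw [Finset.mem_map]
    exact ⟨fun _ => Finset.mem_univ _, fun _ =>
      ⟨e.toEquiv.symm y, Finset.mem_univ _, Equiv.apply_symm_apply _ _⟩⟩
  calc Finset.univ.val.map (fun u => N2.nested (e.toEquiv u))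
      = (Finset.univ.val.map e.toEquiv).map N2.nested := by rw [Multiset.map_map]; rfl
    _ = (Finset.univ.map e.toEquiv.toEmbedding).val.map N2.nested := rfl
    _ = Finset.univ.val.map N2.nested := by rw [h2]

end TCProof
namespace TCProof
open LDag

variable {S : Type}

theorem iso_of_upsilon {N1 N2 : LDag S} (h1 : N1.TreeChild) (h2 : N2.TreeChild)
    (hU : N1.UpsilonM = N2.UpsilonM) : N1.IsIso N2 := by
  have inj1 := nested_inj N1 h1
  have inj2 := nested_inj N2 h2
  have hex : ∀ u : N1.V, ∃ v : N2.V, N2.nested v = N1.nested u := by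
    intro u
    have hmem : N1.nested u ∈ N2.UpsilonM := by
      rw [← hU, UpsilonM]
      exact Multiset.mem_map.mpr ⟨u, Finset.mem_univ u, rfl⟩
    obtain ⟨v, _, hv⟩ := Multiset.mem_map.mp hmem
    exact ⟨v, hv⟩
  let φ : N1.V → N2.V := fun u => Classical.choose (hex u)
  have hφ : ∀ u, N2.nested (φ u) = N1.nested u := fun u => Classical.choose_spec (hex u)
  have hinj : Function.Injective φ := by
    intro a b hab
    apply inj1
    rw [← hφ a, ← hφ b, hab]
  have hcard : Fintype.card N1.V = Fintype.card N2.V := by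
    have := congrArg Multiset.card hU
    simpa [UpsilonM, Multiset.card_map] using this
  have hbij : Function.Bijective φ := (Fintype.bijective_iff_injective_and_card φ).mpr ⟨hinj, hcard⟩
  let e : N1.V ≃ N2.V := Equiv.ofBijective φ hbij
  have he : ∀ u, N2.nested (e u) = N1.nested u := hφ
  refine ⟨⟨e, ?_, ?_⟩⟩
  · intro u w
    constructor
    · intro hadj
      have hu2 : ¬ N2.IsLeaf (e u) := fun hl => hl _ hadj
      have hu1 : ¬ N1.IsLeaf u := fun hl => hu2 ((leaf_iff (he u).symm).mp hl)
      have hc : childMS N1 u = childMS N2 (e u) := childMS_eq (he u).symm hu1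
      have hmem : N2.nested (e w) ∈ childMS N1 u := by
        rw [hc]
        exact Multiset.mem_map.mpr ⟨e w, Finset.mem_filter.mpr ⟨Finset.mem_univ _, hadj⟩, rfl⟩
      obtain ⟨y, hy, hyw⟩ := Multiset.mem_map.mp hmem
      have hyweq : y = w := inj1 (by rw [hyw, he w])
      rw [← hyweq]
      exact (Finset.mem_filter.mp hy).2
    · intro hadj
      have hu1 : ¬ N1.IsLeaf u := fun hl => hl _ hadj
      have hc : childMS N1 u = childMS N2 (e u) := childMS_eq (he u).symm hu1
      have hmem : N1.nested w ∈ childMS N2 (e u) := by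
        rw [← hc]
        exact Multiset.mem_map.mpr ⟨w, Finset.mem_filter.mpr ⟨Finset.mem_univ _, hadj⟩, rfl⟩
      obtain ⟨y, hy, hyw⟩ := Multiset.mem_map.mp hmem
      have : y = e w := inj2 (by rw [hyw, ← he w])
      rw [← this]
      exact (Finset.mem_filter.mp hy).2
  · intro v hv
    exact (lab_eq (he v).symm hv).symm

end TCProof
namespace TCProof
open LDag

variable {S : Type}

theorem mDist_eq_zero_iff (N1 N2 : LDag S) :
    N1.mDist N2 = 0 ↔ N1.UpsilonM = N2.UpsilonM := by
  rw [mDist, div_eq_zero_iff]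
  simp only [Nat.cast_eq_zero, OfNat.ofNat_ne_zero, or_false]
  rw [Multiset.card_eq_zero, add_eq_zero]
  rw [tsub_eq_zero_iff_le, tsub_eq_zero_iff_le]
  exact ⟨fun ⟨ha, hb⟩ => le_antisymm ha hb, fun h => ⟨le_of_eq h, le_of_eq h.symm⟩⟩

end TCProof

/-- For tree-child phylogenetic networks on the same taxon set, `Υ(N1) = Υ(N2)` iff
`N1 ≅ N2`; equivalently, Nakhleh's dissimilarity `m(N1,N2)` vanishes iff `N1 ≅ N2`. -/
theorem treechild_upsilon_separates {S : Type} (N1 N2 : PhyloNetwork S)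
    (h1 : N1.toLDag.TreeChild) (h2 : N2.toLDag.TreeChild) :
    (N1.toLDag.UpsilonM = N2.toLDag.UpsilonM ↔ N1.toLDag.IsIso N2.toLDag) ∧
    (N1.toLDag.mDist N2.toLDag = 0 ↔ N1.toLDag.IsIso N2.toLDag) := by
  have key : N1.toLDag.UpsilonM = N2.toLDag.UpsilonM ↔ N1.toLDag.IsIso N2.toLDag :=
    ⟨TCProof.iso_of_upsilon h1 h2, TCProof.upsilon_of_iso⟩
  exact ⟨key, (TCProof.mDist_eq_zero_iff _ _).trans key⟩
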